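/- Let n ≥ 3 and let Q_n be the n-dimensional hypercube graph. If n - ⌈log₂ n⌉ > 2^{⌈log₂ n⌉ - 1}, then det'(Q_n) = ⌈log₂ n⌉ + 1; otherwise det'(Q_n) = ⌈log₂ n⌉. -/

import Mathlib

/-- `S` is a vertex determining set of `G`: the only automorphism of `G`
fixing every vertex of `S` is the identity. -/
def IsVertexDetSet {V : Type*} (G : SimpleGraph V) (S : Set V) : Prop :=
  ∀ φ : G ≃g G, (∀ v ∈ S, φ v = v) → ∀ w, φ w = w

/-- `T` is an edge determining set of `G`: `T` consists of edges of `G`, and the only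
automorphism of `G` mapping each edge of `T` to itself (as an unordered pair) is the identity. -/
def IsEdgeDetSet {V : Type*} (G : SimpleGraph V) (T : Set (Sym2 V)) : Prop :=
  T ⊆ G.edgeSet ∧ ∀ φ : G ≃g G, (∀ e ∈ T, Sym2.map φ e = e) → ∀ w, φ w = w

/-- The determining number `det(G)`: the minimum size of a vertex determining set. -/
noncomputable def detNum {V : Type*} (G : SimpleGraph V) : ℕ :=
  sInf {k | ∃ S : Finset V, S.card = k ∧ IsVertexDetSet G ↑S}

/-- The determining index `det'(G)`: the minimum size of an edge determining set. -/
noncomputable def detIndex {V : Type*} (G : SimpleGraph V) : ℕ :=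
  sInf {k | ∃ T : Finset (Sym2 V), T.card = k ∧ IsEdgeDetSet G ↑T}

/-- The `n`-dimensional hypercube: vertices are the 0-1 strings of length `n`,
with two strings adjacent iff they differ in exactly one coordinate. -/
def hypercubeGraph (n : ℕ) : SimpleGraph (Fin n → Bool) where
  Adj x y := hammingDist x y = 1
  symm := by
    constructor
    intro x y h
    rwa [hammingDist_comm]
  loopless := by
    constructor
    intro x h
    simp [hammingDist_self] at h
namespace HCube
variable {n : ℕ}

/-- flip coordinate i -/
def flipc (x : Fin n → Bool) (i : Fin n) : Fin n → Bool := Function.update x i (!x i)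

lemma flipc_self (x : Fin n → Bool) (i : Fin n) : flipc x i i = !x i := by
  simp [flipc]

lemma flipc_ne (x : Fin n → Bool) {i j : Fin n} (h : j ≠ i) : flipc x i j = x j := by
  simp [flipc, Function.update_of_ne h]

lemma flipc_ne_self (x : Fin n → Bool) (i : Fin n) : flipc x i ≠ x := by
  intro h
  have := congrFun h i
  simp [flipc] at this

lemma flipc_flipc (x : Fin n → Bool) (i : Fin n) : flipc (flipc x i) i = x := by
  funext j
  by_cases h : j = i
  · subst h; simp [flipc]
  · simp [flipc, Function.update_of_ne h]

lemma hammingDist_flipc (x : Fin n → Bool) (i : Fin n) : hammingDist x (flipc x i) = 1 := by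
  have : ({j | x j ≠ flipc x i j} : Finset (Fin n)) = {i} := by
    ext j
    by_cases h : j = i
    · subst h; simp only [Finset.mem_filter]; simp [flipc]
    · simp only [Finset.mem_filter]; simp [flipc, Function.update_of_ne h, h]
  rw [hammingDist, this, Finset.card_singleton]

lemma adj_iff {x y : Fin n → Bool} : (hypercubeGraph n).Adj x y ↔ ∃ i, y = flipc x i := by
  constructor
  · intro h
    have h1 : ({j | x j ≠ y j} : Finset (Fin n)).card = 1 := h
    obtain ⟨i, hi⟩ := Finset.card_eq_one.mp h1
    refine ⟨i, funext fun j => ?_⟩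
    by_cases h : j = i
    · subst h
      have : j ∈ ({j | x j ≠ y j} : Finset (Fin n)) := by rw [hi]; exact Finset.mem_singleton_self _
      simp only [Finset.mem_filter] at this
      have := this.2
      rw [flipc_self]
      revert this; cases x j <;> cases y j <;> simp
    · have : j ∉ ({j' | x j' ≠ y j'} : Finset (Fin n)) := by rw [hi]; simp [h]
      simp only [Finset.mem_filter, Finset.mem_univ, true_and, not_not] at this
      rw [flipc_ne _ h, this]
  · rintro ⟨i, rfl⟩
    exact hammingDist_flipc x i

end HCube
namespace HCube
variable {n : ℕ}

lemma hammingDist_comp_perm (x y : Fin n → Bool) (σ : Equiv.Perm (Fin n)) :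
    hammingDist (fun i => x (σ i)) (fun i => y (σ i)) = hammingDist x y := by
  unfold hammingDist
  apply Finset.card_bij (fun a _ => σ a)
  · intro a ha
    simp only [Finset.mem_filter, Finset.mem_univ, true_and] at ha ⊢
    exact ha
  · intro a _ b _ h
    exact σ.injective h
  · intro b hb
    simp only [Finset.mem_filter, Finset.mem_univ, true_and] at hb ⊢
    exact ⟨σ.symm b, by simpa using hb, by simp⟩

lemma hammingDist_xor (c x y : Fin n → Bool) :
    hammingDist (fun i => xor (c i) (x i)) (fun i => xor (c i) (y i)) = hammingDist x y := by
  apply hammingDist_comp (fun i b => xor (c i) b)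
  intro i a b h
  cases hc : c i <;> rw [hc] at h <;> simpa using h

/-- The automorphism of the hypercube given by translation by `c` and coordinate
permutation `σ`. -/
def xorAut (c : Fin n → Bool) (σ : Equiv.Perm (Fin n)) :
    hypercubeGraph n ≃g hypercubeGraph n where
  toFun x := fun i => xor (c i) (x (σ i))
  invFun y := fun i => xor (c (σ.symm i)) (y (σ.symm i))
  left_inv := by intro x; funext i; simp
  right_inv := by intro y; funext i; simp
  map_rel_iff' := by
    intro x y
    show hammingDist (fun i => xor (c i) (x (σ i))) (fun i => xor (c i) (y (σ i))) = 1
      ↔ hammingDist x y = 1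
    have : hammingDist (fun i => xor (c i) (x (σ i))) (fun i => xor (c i) (y (σ i)))
        = hammingDist x y := by
      rw [hammingDist_xor c (fun i => x (σ i)) (fun i => y (σ i)),
        hammingDist_comp_perm x y σ]
    rw [this]

lemma xorAut_apply (c : Fin n → Bool) (σ : Equiv.Perm (Fin n)) (x : Fin n → Bool) :
    xorAut c σ x = fun i => xor (c i) (x (σ i)) := rfl

end HCube
namespace HCube
variable {n : ℕ}

def zf : Fin n → Bool := fun _ => false

def unit (i : Fin n) : Fin n → Bool := flipc zf i

lemma unit_apply (i k : Fin n) : unit i k = decide (k = i) := by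
  by_cases h : k = i
  · subst h; simp [unit, flipc, zf]
  · simp [unit, flipc, zf, Function.update_of_ne h, h]

lemma unit_injective : Function.Injective (unit (n := n)) := by
  intro i j h
  have := congrFun h i
  simp [unit_apply] at this
  exact this

lemma wt_flipc_true {x : Fin n → Bool} {i : Fin n} (hx : x i = true) :
    hammingDist zf x = hammingDist zf (flipc x i) + 1 := by
  have hs : ({j | zf j ≠ flipc x i j} : Finset (Fin n))
      = ({j | zf j ≠ x j} : Finset (Fin n)).erase i := by
    ext j
    by_cases h : j = i
    · subst h
      simp [flipc, zf, hx]
    · simp [flipc, zf, Function.update_of_ne h, h]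
  have hi : i ∈ ({j | zf j ≠ x j} : Finset (Fin n)) := by simp [zf, hx]
  show ({j | zf j ≠ x j} : Finset (Fin n)).card = ({j | zf j ≠ flipc x i j} : Finset (Fin n)).card + 1
  rw [hs, Finset.card_erase_add_one hi]

lemma exists_two_true {x : Fin n → Bool} (h : 2 ≤ hammingDist zf x) :
    ∃ i j : Fin n, i ≠ j ∧ x i = true ∧ x j = true := by
  have h1 : 1 < ({j | zf j ≠ x j} : Finset (Fin n)).card := h
  obtain ⟨a, ha, b, hb, hab⟩ := Finset.one_lt_card.mp h1
  simp only [Finset.mem_filter, Finset.mem_univ, true_and] at ha hb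
  simp only [zf] at ha hb
  exact ⟨a, b, hab, by simpa using ha.symm, by simpa using hb.symm⟩

/-- common neighbours of two vertices at distance two -/
lemma common_nbr {y z w : Fin n → Bool} {a b : Fin n} (hab : a ≠ b)
    (ha : y a ≠ z a) (hb : y b ≠ z b) (hother : ∀ c, c ≠ a → c ≠ b → y c = z c)
    (h1 : (hypercubeGraph n).Adj y w) (h2 : (hypercubeGraph n).Adj z w) :
    w = flipc y a ∨ w = flipc y b := by
  obtain ⟨p, rfl⟩ := adj_iff.mp h1
  obtain ⟨q, hq⟩ := adj_iff.mp h2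
  by_cases hpa : p = a
  · subst hpa; exact Or.inl rfl
  by_cases hpb : p = b
  · subst hpb; exact Or.inr rfl
  exfalso
  -- q must equal a and also b
  have hqa : q = a := by
    by_contra hqa
    have h3 : flipc y p a = y a := flipc_ne _ (fun h => hpa h.symm)
    have h4 : flipc z q a = z a := flipc_ne _ (fun h => hqa h.symm)
    rw [← hq] at h4
    exact ha (h3 ▸ h4 ▸ rfl)
  have hqb : q = b := by
    by_contra hqb
    have h3 : flipc y p b = y b := flipc_ne _ (fun h => hpb h.symm)
    have h4 : flipc z q b = z b := flipc_ne _ (fun h => hqb h.symm)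
    rw [← hq] at h4
    exact hb (h3 ▸ h4 ▸ rfl)
  exact hab (hqa ▸ hqb)

end HCube
namespace HCube
variable {n : ℕ}

lemma exists_perm_of_fixes_zero (ψ : hypercubeGraph n ≃g hypercubeGraph n) (h0 : ψ zf = zf) :
    ∃ σ : Equiv.Perm (Fin n), ∀ x, ψ x = fun i => x (σ i) := by
  have hπ : ∀ i : Fin n, ∃ j, ψ (unit i) = unit j := by
    intro i
    have hadj : (hypercubeGraph n).Adj zf (unit i) := adj_iff.mpr ⟨i, rfl⟩
    have hadj2 : (hypercubeGraph n).Adj (ψ zf) (ψ (unit i)) := ψ.map_rel_iff.mpr hadj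
    rw [h0] at hadj2
    obtain ⟨j, hj⟩ := adj_iff.mp hadj2
    exact ⟨j, hj⟩
  choose π hπ using hπ
  have hinj : Function.Injective π := by
    intro i j h
    apply unit_injective
    apply ψ.injective
    rw [hπ i, hπ j, h]
  let πe : Equiv.Perm (Fin n) := Equiv.ofBijective π (Finite.injective_iff_bijective.mp hinj)
  have hπe : ∀ i, πe i = π i := fun _ => rfl
  set ρ : (Fin n → Bool) → (Fin n → Bool) := fun u p => u (πe.symm p) with hρ
  have hρflip : ∀ (u : Fin n → Bool) (a : Fin n), ρ (flipc u a) = flipc (ρ u) (πe a) := by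
    intro u a
    funext p
    by_cases h : p = πe a
    · subst h
      have e1 : πe.symm (πe a) = a := Equiv.symm_apply_apply _ _
      show flipc u a (πe.symm (πe a)) = flipc (ρ u) (πe a) (πe a)
      rw [e1, flipc_self, flipc_self]
      show (!u a) = !(u (πe.symm (πe a)))
      rw [e1]
    · have h2 : πe.symm p ≠ a := fun hc => h (by rw [← hc, Equiv.apply_symm_apply])
      show flipc u a (πe.symm p) = flipc (ρ u) (πe a) p
      rw [flipc_ne _ h2, flipc_ne _ h]
  have key : ∀ (w : ℕ) (x : Fin n → Bool), hammingDist zf x = w → ψ x = ρ x := by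
    intro w
    induction w using Nat.strong_induction_on with
    | _ w IH =>
      rcases w with _ | _ | w
      · intro x hx
        have : zf = x := hammingDist_eq_zero.mp hx
        subst this
        rw [h0]
        rfl
      · intro x hx
        have hadj : (hypercubeGraph n).Adj zf x := hx
        obtain ⟨i, rfl⟩ := adj_iff.mp hadj
        show ψ (unit i) = ρ (unit i)
        rw [hπ i]
        funext p
        show unit (π i) p = unit i (πe.symm p)
        simp only [unit_apply]
        have : πe.symm p = i ↔ p = π i := by
          rw [Equiv.symm_apply_eq, hπe]
        simp [this]
      · intro x hx
        have h2 : 2 ≤ hammingDist zf x := by omega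
        obtain ⟨i, j, hij, hxi, hxj⟩ := exists_two_true h2
        set y := flipc x i with hy_def
        set z := flipc x j with hz_def
        set x' := flipc y j with hx'_def
        have hyj : y j = true := by rw [hy_def, flipc_ne _ hij.symm]; exact hxj
        have hwy : hammingDist zf y = w + 1 := by
          have h := wt_flipc_true hxi
          rw [← hy_def] at h
          omega
        have hwz : hammingDist zf z = w + 1 := by
          have h := wt_flipc_true hxj
          rw [← hz_def] at h
          omega
        have hwx' : hammingDist zf x' = w := by
          have h := wt_flipc_true hyj
          rw [← hx'_def] at h
          omega
        have hψy := IH (w+1) (by omega) y hwy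
        have hψz := IH (w+1) (by omega) z hwz
        have hψx' := IH w (by omega) x' hwx'
        have haxy : (hypercubeGraph n).Adj y x := adj_iff.mpr ⟨i, (flipc_flipc x i).symm⟩
        have haxz : (hypercubeGraph n).Adj z x := adj_iff.mpr ⟨j, (flipc_flipc x j).symm⟩
        have h1 : (hypercubeGraph n).Adj (ρ y) (ψ x) := by
          rw [← hψy]; exact ψ.map_rel_iff.mpr haxy
        have h2' : (hypercubeGraph n).Adj (ρ z) (ψ x) := by
          rw [← hψz]; exact ψ.map_rel_iff.mpr haxz
        have hab : πe i ≠ πe j := fun h => hij (πe.injective h)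
        have hyi' : y i = !x i := by rw [hy_def, flipc_self]
        have hzi' : z i = x i := by rw [hz_def, flipc_ne _ hij]
        have hyj' : y j = x j := by rw [hy_def, flipc_ne _ hij.symm]
        have hzj' : z j = !x j := by rw [hz_def, flipc_self]
        have ha : ρ y (πe i) ≠ ρ z (πe i) := by
          show y (πe.symm (πe i)) ≠ z (πe.symm (πe i))
          rw [Equiv.symm_apply_apply, hyi', hzi']
          cases x i <;> simp
        have hb : ρ y (πe j) ≠ ρ z (πe j) := by
          show y (πe.symm (πe j)) ≠ z (πe.symm (πe j))
          rw [Equiv.symm_apply_apply, hyj', hzj']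
          cases x j <;> simp
        have hother : ∀ c, c ≠ πe i → c ≠ πe j → ρ y c = ρ z c := by
          intro c hci hcj
          show y (πe.symm c) = z (πe.symm c)
          have hqi : πe.symm c ≠ i := fun hc => hci (by rw [← hc, Equiv.apply_symm_apply])
          have hqj : πe.symm c ≠ j := fun hc => hcj (by rw [← hc, Equiv.apply_symm_apply])
          rw [hy_def, hz_def, flipc_ne _ hqi, flipc_ne _ hqj]
        rcases common_nbr hab ha hb hother h1 h2' with hc | hc
        · rw [hc, ← hρflip, hy_def, flipc_flipc]
        · exfalso
          rw [← hρflip, ← hx'_def, ← hψx'] at hc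
          have hxx' : x = x' := ψ.injective hc
          have : x i = x' i := by rw [← hxx']
          rw [hx'_def, flipc_ne _ hij, hyi', hxi] at this
          simp at this
  exact ⟨πe.symm, fun x => key (hammingDist zf x) x rfl⟩

/-- Every automorphism of the hypercube is a coordinate permutation followed by
  a translation. -/
theorem exists_decomp (φ : hypercubeGraph n ≃g hypercubeGraph n) :
    ∃ (c : Fin n → Bool) (σ : Equiv.Perm (Fin n)),
      ∀ x, φ x = fun i => xor (c i) (x (σ i)) := by
  let τ : hypercubeGraph n ≃g hypercubeGraph n := xorAut (φ zf) 1
  let ψ : hypercubeGraph n ≃g hypercubeGraph n := φ.trans τ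
  have hψ : ∀ x (i : Fin n), ψ x i = xor (φ zf i) (φ x i) := fun x i => rfl
  have hψ0 : ψ zf = zf := by
    funext i
    rw [hψ]
    simp [zf]
  obtain ⟨σ, hσ⟩ := exists_perm_of_fixes_zero ψ hψ0
  refine ⟨φ zf, σ, fun x => funext fun i => ?_⟩
  have h1 : ψ x i = x (σ i) := by rw [hσ x]
  rw [hψ] at h1
  show φ x i = xor (φ zf i) (x (σ i))
  rw [← h1]
  cases φ zf i <;> simp
end HCube
namespace HCube
variable {n : ℕ}

lemma edge_repr {e : Sym2 (Fin n → Bool)} (he : e ∈ (hypercubeGraph n).edgeSet) :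
    ∃ (x : Fin n → Bool) (i : Fin n), e = s(x, flipc x i) := by
  induction e with
  | _ a b =>
    rw [SimpleGraph.mem_edgeSet] at he
    obtain ⟨i, rfl⟩ := adj_iff.mp he
    exact ⟨a, i, rfl⟩

lemma edge_direction {x y : Fin n → Bool} {i j : Fin n}
    (h : s(x, flipc x i) = s(y, flipc y j)) : i = j := by
  by_contra hij
  rcases Sym2.eq_iff.mp h with ⟨h1, h2⟩ | ⟨h1, h2⟩
  · subst h1
    have := congrFun h2 i
    rw [flipc_self, flipc_ne _ hij] at this
    have := congrFun h2 j
    rw [flipc_ne _ (fun hc => hij hc.symm), flipc_self] at this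
    revert this
    have h3 := congrFun h2 i
    rw [flipc_self, flipc_ne _ hij] at h3
    cases hx : x i
    · rw [hx] at h3; simp at h3
    · rw [hx] at h3; simp at h3
  · -- x = flipc y j and flipc x i = y
    have h2' : x = flipc y j := h1
    have h3 : y = flipc x i := h2.symm
    rw [h3] at h2'
    have := congrFun h2' i
    rw [flipc_ne _ hij, flipc_self] at this
    cases hx : x i
    · rw [hx] at this; simp at this
    · rw [hx] at this; simp at this

lemma decomp_flipc {φ : hypercubeGraph n ≃g hypercubeGraph n} {c : Fin n → Bool}
    {σ : Equiv.Perm (Fin n)} (hφ : ∀ x, φ x = fun p => xor (c p) (x (σ p)))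
    (x : Fin n → Bool) (i : Fin n) : φ (flipc x i) = flipc (φ x) (σ.symm i) := by
  funext p
  rw [hφ, hφ]
  by_cases h : p = σ.symm i
  · subst h
    show xor (c (σ.symm i)) (flipc x i (σ (σ.symm i))) = flipc _ (σ.symm i) (σ.symm i)
    rw [Equiv.apply_symm_apply, flipc_self, flipc_self]
    show xor (c (σ.symm i)) (!x i) = !(xor (c (σ.symm i)) (x (σ (σ.symm i))))
    rw [Equiv.apply_symm_apply]
    cases c (σ.symm i) <;> cases x i <;> rfl
  · have h2 : σ p ≠ i := fun hc => h (by rw [← hc, Equiv.symm_apply_apply])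
    show xor (c p) (flipc x i (σ p)) = flipc _ (σ.symm i) p
    rw [flipc_ne _ h2, flipc_ne _ h]

/-- extracting constraints from a fixed edge -/
lemma fixed_edge_constraints {φ : hypercubeGraph n ≃g hypercubeGraph n} {c : Fin n → Bool}
    {σ : Equiv.Perm (Fin n)} (hφ : ∀ x, φ x = fun p => xor (c p) (x (σ p)))
    {x : Fin n → Bool} {i : Fin n}
    (h : Sym2.map φ s(x, flipc x i) = s(x, flipc x i)) :
    σ i = i ∧ ∀ j, j ≠ i → xor (c j) (x (σ j)) = x j := by
  rw [Sym2.map_pair_eq, decomp_flipc hφ] at h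
  have hd : σ.symm i = i := edge_direction h
  have hσi : σ i = i := by
    conv_lhs => rw [← hd]
    rw [Equiv.apply_symm_apply]
  rw [hd] at h
  refine ⟨hσi, fun j hj => ?_⟩
  have hx : φ x j = x j := by
    rcases Sym2.eq_iff.mp h with ⟨h1, _⟩ | ⟨h1, h2⟩
    · rw [h1]
    · rw [h1, flipc_ne _ hj]
  rw [hφ] at hx
  exact hx

end HCube
namespace HCube
variable {n : ℕ}

lemma lower_bound {T : Finset (Sym2 (Fin n → Bool))} (hn : 2 ≤ n)
    (hT : IsEdgeDetSet (hypercubeGraph n) ↑T) :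
    n ≤ 2 ^ (T.card - 1) + T.card := by
  by_contra hcon
  push_neg at hcon
  rcases Nat.eq_zero_or_pos T.card with hk0 | hkpos
  · -- T is empty
    have hTe : T = ∅ := Finset.card_eq_zero.mp hk0
    have h01 : (⟨0, by omega⟩ : Fin n) ≠ ⟨1, by omega⟩ := by
      intro h; simpa using congrArg Fin.val h
    set a : Fin n := ⟨0, by omega⟩
    set b : Fin n := ⟨1, by omega⟩
    have := hT.2 (xorAut zf (Equiv.swap a b)) (by
      intro e he
      rw [hTe] at he
      simp at he)
    have h2 := congrFun (this (unit a)) b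
    show False
    have : xorAut zf (Equiv.swap a b) (unit a) b = xor (zf b) (unit a (Equiv.swap a b b)) := rfl
    rw [this, Equiv.swap_apply_right] at h2
    simp [zf, unit_apply, h01] at h2
    exact h01 h2.symm
  · -- T nonempty
    obtain ⟨e0, he0⟩ := Finset.card_pos.mp hkpos
    have hrep : ∀ e : {e // e ∈ T}, ∃ x i, (e : Sym2 (Fin n → Bool)) = s(x, flipc x i) := by
      intro e
      exact edge_repr (hT.1 e.2)
    choose X I hXI using hrep
    set e0' : {e // e ∈ T} := ⟨e0, he0⟩
    set D : Finset (Fin n) := Finset.image I Finset.univ with hD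
    have hDcard : D.card ≤ T.card := by
      calc D.card ≤ Finset.univ.card := Finset.card_image_le
      _ = T.card := by rw [Finset.card_univ, Fintype.card_coe]
    set N : Finset (Fin n) := Finset.univ \ D with hN
    have hNcard : 2 ^ (T.card - 1) < N.card := by
      have : N.card = n - D.card := by
        rw [hN, Finset.card_sdiff_of_subset (Finset.subset_univ D), Finset.card_univ]
        simp
      omega
    -- the pigeonhole map
    set C := ({e // e ∈ T.erase e0} → Bool)
    have hCcard : (Finset.univ : Finset C).card = 2 ^ (T.card - 1) := by
      rw [Finset.card_univ]
      show Fintype.card ({e // e ∈ T.erase e0} → Bool) = 2 ^ (T.card - 1)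
      rw [Fintype.card_fun, Fintype.card_coe, Fintype.card_bool,
        Finset.card_erase_of_mem he0]
    set μ : Fin n → C := fun j => fun t =>
      xor (X ⟨t.1, Finset.mem_of_mem_erase t.2⟩ j) (X e0' j) with hμdef
    obtain ⟨a, ha, b, hb, hab, hμab⟩ :=
      Finset.exists_ne_map_eq_of_card_lt_of_maps_to (hCcard ▸ hNcard)
        (fun x _ => Finset.mem_univ (μ x))
    set β : Bool := xor (X e0' a) (X e0' b) with hβ
    have key : ∀ t : {e // e ∈ T}, xor (X t a) (X t b) = β := by
      intro t
      by_cases ht : t.1 = e0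
      · have : t = e0' := Subtype.ext ht
        rw [this]
      · have ht' : t.1 ∈ T.erase e0 := Finset.mem_erase.mpr ⟨ht, t.2⟩
        have h := congrFun hμab ⟨t.1, ht'⟩
        have hval : (⟨(⟨t.1, ht'⟩ : {e // e ∈ T.erase e0}).1,
            Finset.mem_of_mem_erase (⟨t.1, ht'⟩ : {e // e ∈ T.erase e0}).2⟩ : {e // e ∈ T}) = t :=
          Subtype.ext rfl
        rw [hμdef] at h
        simp only [hval] at h
        rw [hβ]
        revert h
        cases X t a <;> cases X t b <;> cases X e0' a <;> cases X e0' b <;> simp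
    -- the nontrivial automorphism
    set c : Fin n → Bool := fun j => if j = a ∨ j = b then β else false with hc
    set σ : Equiv.Perm (Fin n) := Equiv.swap a b with hσ
    set φ := xorAut c σ with hφdef
    have hφ : ∀ x, φ x = fun p => xor (c p) (x (σ p)) := fun x => rfl
    have hIa : ∀ t : {e // e ∈ T}, I t ≠ a ∧ I t ≠ b := by
      intro t
      have hID : I t ∈ D := Finset.mem_image.mpr ⟨t, Finset.mem_univ t, rfl⟩
      constructor
      · intro h; rw [h] at hID
        rw [hN, Finset.mem_sdiff] at ha
        exact ha.2 hID
      · intro h; rw [h] at hID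
        rw [hN, Finset.mem_sdiff] at hb
        exact hb.2 hID
    have hfix : ∀ t : {e // e ∈ T}, φ (X t) = X t := by
      intro t
      funext j
      rw [hφ]
      by_cases hja : j = a
      · subst hja
        show xor (c j) (X t (σ j)) = X t j
        rw [hσ]
        simp only [Equiv.swap_apply_left]
        have hcj : c j = β := by rw [hc]; simp
        rw [hcj, ← key t]
        cases X t j <;> cases X t b <;> rfl
      · by_cases hjb : j = b
        · subst hjb
          show xor (c j) (X t (σ j)) = X t j
          rw [hσ]
          simp only [Equiv.swap_apply_right]
          have hcj : c j = β := by rw [hc]; simp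
          rw [hcj, ← key t]
          cases X t j <;> cases X t a <;> rfl
        · show xor (c j) (X t (σ j)) = X t j
          have hcj : c j = false := by rw [hc]; simp [hja, hjb]
          rw [hcj, hσ, Equiv.swap_apply_of_ne_of_ne hja hjb]
          simp
    have hedges : ∀ e ∈ (↑T : Set (Sym2 (Fin n → Bool))), Sym2.map φ e = e := by
      intro e he
      have he' : e ∈ T := he
      set t : {e // e ∈ T} := ⟨e, he'⟩
      have hrepr : e = s(X t, flipc (X t) (I t)) := hXI t
      have hσI : σ.symm (I t) = I t := by
        rw [hσ, Equiv.symm_swap, Equiv.swap_apply_of_ne_of_ne (hIa t).1 (hIa t).2]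
      rw [hrepr, Sym2.map_pair_eq, decomp_flipc hφ, hσI, hfix t]
    have hid := hT.2 φ hedges
    -- derive a contradiction: φ is not the identity
    cases hβval : β
    · -- c = 0, so φ is the coordinate swap
      have h2 := congrFun (hid (unit a)) b
      rw [hφ] at h2
      simp only at h2
      have hcb : c b = false := by rw [hc, hβval]; simp
      rw [hcb, hσ, Equiv.swap_apply_right] at h2
      simp [unit_apply, hab] at h2
      exact (Ne.symm hab) h2
    · -- c a = true, so φ moves zf
      have h2 := congrFun (hid zf) a
      rw [hφ] at h2
      have hca : c a = true := by rw [hc, hβval]; simp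
      have h2' : xor (c a) (zf (σ a)) = zf a := h2
      rw [hca] at h2'
      simp [zf] at h2'
end HCube
namespace HCube
variable {n : ℕ}

lemma upper_bound (k : ℕ) (h2 : 2 ≤ k) (hkn : k ≤ n) (hbound : n ≤ 2 ^ (k - 1) + k) :
    ∃ T : Finset (Sym2 (Fin n → Bool)), T.card = k ∧ IsEdgeDetSet (hypercubeGraph n) ↑T := by
  set dir : Fin k → Fin n := fun t => ⟨t, lt_of_lt_of_le t.2 hkn⟩ with hdir
  set xv : Fin k → (Fin n → Bool) :=
    fun t j => if (j : ℕ) < k then false else Nat.testBit ((j : ℕ) - k) t with hxv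
  set edge : Fin k → Sym2 (Fin n → Bool) := fun t => s(xv t, flipc (xv t) (dir t)) with hedge
  have hedgeinj : Function.Injective edge := by
    intro t s h
    have hd := edge_direction (x := xv t) (y := xv s) h
    have h2 := congrArg Fin.val hd
    exact Fin.ext h2
  refine ⟨Finset.image edge Finset.univ, ?_, ?_, ?_⟩
  · rw [Finset.card_image_of_injective _ hedgeinj, Finset.card_univ, Fintype.card_fin]
  · -- subset of edge set
    intro e he
    simp only [Finset.coe_image, Set.mem_image] at he
    obtain ⟨t, _, rfl⟩ := he
    rw [hedge]
    exact (SimpleGraph.mem_edgeSet _).mpr (adj_iff.mpr ⟨dir t, rfl⟩)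
  · -- determining
    intro φ hE
    obtain ⟨c, σ, hφ⟩ := exists_decomp φ
    have hcons : ∀ t : Fin k, σ (dir t) = dir t ∧
        ∀ j, j ≠ dir t → xor (c j) (xv t (σ j)) = xv t j := by
      intro t
      apply fixed_edge_constraints hφ
      apply hE
      simp only [Finset.coe_image, Set.mem_image]
      exact ⟨t, by simp, rfl⟩
    have hdirfix : ∀ j : Fin n, (j : ℕ) < k → σ j = j := by
      intro j hj
      have : j = dir ⟨(j : ℕ), hj⟩ := Fin.ext rfl
      rw [this]
      exact (hcons _).1
    have hfree : ∀ j : Fin n, k ≤ (j : ℕ) → σ j = j ∧ c j = false := by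
      intro j hj
      have hσjk : k ≤ ((σ j : Fin n) : ℕ) := by
        by_contra hlt
        push_neg at hlt
        have h1 : σ j = dir ⟨((σ j : Fin n) : ℕ), hlt⟩ := Fin.ext rfl
        have h2 : σ (dir ⟨((σ j : Fin n) : ℕ), hlt⟩) = dir ⟨((σ j : Fin n) : ℕ), hlt⟩ :=
          (hcons _).1
        have h3 : σ j = σ (dir ⟨((σ j : Fin n) : ℕ), hlt⟩) := by rw [h2, ← h1]
        have := σ.injective h3
        rw [this] at hj
        simp [hdir] at hj
        omega
      set u : ℕ := ((σ j : Fin n) : ℕ) - k with hu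
      set v : ℕ := ((j : Fin n) : ℕ) - k with hv
      have hun : u < 2 ^ (k - 1) := by
        have : ((σ j : Fin n) : ℕ) < n := (σ j).2
        omega
      have hvn : v < 2 ^ (k - 1) := by
        have : ((j : Fin n) : ℕ) < n := j.2
        omega
      have hbit : ∀ t : Fin k, xor (c j) (Nat.testBit u t) = Nat.testBit v t := by
        intro t
        have hjd : j ≠ dir t := by
          intro h
          have : (j : ℕ) = (t : ℕ) := congrArg Fin.val h
          have := t.2
          omega
        have := (hcons t).2 j hjd
        rw [hxv] at this
        simp only at this
        rw [if_neg (by omega), if_neg (by omega)] at this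
        exact this
      have hcj : c j = false := by
        by_contra hc
        have hc' : c j = true := by revert hc; cases c j <;> simp
        have := hbit ⟨k - 1, by omega⟩
        rw [hc'] at this
        rw [Nat.testBit_lt_two_pow hun, Nat.testBit_lt_two_pow hvn] at this
        simp at this
      have huv : u = v := by
        apply Nat.eq_of_testBit_eq
        intro i
        by_cases hik : i < k
        · have := hbit ⟨i, hik⟩
          rw [hcj] at this
          simpa using this
        · push_neg at hik
          have hik1 : 2 ^ (k - 1) ≤ 2 ^ i := Nat.pow_le_pow_right (by omega) (by omega)
          rw [Nat.testBit_lt_two_pow (by omega), Nat.testBit_lt_two_pow (by omega)]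
      have hσj : σ j = j := by
        apply Fin.ext
        omega
      exact ⟨hσj, hcj⟩
    have hcall : ∀ j : Fin n, c j = false := by
      intro j
      by_cases hj : (j : ℕ) < k
      · -- use another edge
        set s : Fin k := if (j : ℕ) = 0 then ⟨1, by omega⟩ else ⟨0, by omega⟩ with hs
        have hjs : j ≠ dir s := by
          intro h
          have hh : (j : ℕ) = (s : ℕ) := congrArg Fin.val h
          rw [hs] at hh
          by_cases h0 : (j : ℕ) = 0 <;> simp [h0] at hh
        have := (hcons s).2 j hjs
        rw [hdirfix j hj] at this
        revert this
        cases c j <;> cases xv s j <;> simp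
      · exact (hfree j (by omega)).2
    intro w
    rw [hφ]
    funext i
    have hσi : σ i = i := by
      by_cases hi : (i : ℕ) < k
      · exact hdirfix i hi
      · exact (hfree i (by omega)).1
    rw [hcall i, hσi]
    simp
end HCube
theorem detIndex_hypercube (n : ℕ) (hn : 3 ≤ n) :
    (n - Nat.clog 2 n > 2 ^ (Nat.clog 2 n - 1) →
      detIndex (hypercubeGraph n) = Nat.clog 2 n + 1) ∧
    (¬ (n - Nat.clog 2 n > 2 ^ (Nat.clog 2 n - 1)) →
      detIndex (hypercubeGraph n) = Nat.clog 2 n) := by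
  set m := Nat.clog 2 n with hm
  have hle : n ≤ 2 ^ m := Nat.le_pow_clog (by norm_num) n
  have hlt : 2 ^ (m - 1) < n := Nat.pow_pred_clog_lt_self (by norm_num) (by omega)
  have hm2 : 2 ≤ m := by
    by_contra h
    push_neg at h
    have h2 : 2 ^ m ≤ 2 ^ 1 := Nat.pow_le_pow_right (by norm_num) (by omega)
    norm_num at h2
    omega
  have hmn : m ≤ n := by
    have h1 : m - 1 < 2 ^ (m - 1) := Nat.lt_two_pow_self
    omega
  set S : Set ℕ := {k | ∃ T : Finset (Sym2 (Fin n → Bool)),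
    T.card = k ∧ IsEdgeDetSet (hypercubeGraph n) ↑T} with hS
  have hlower : ∀ j ∈ S, n ≤ 2 ^ (j - 1) + j := by
    rintro j ⟨T, rfl, hT⟩
    exact HCube.lower_bound (by omega) hT
  constructor
  · intro hA
    have hmem : m + 1 ∈ S := by
      obtain ⟨T, hc, hd⟩ := HCube.upper_bound (n := n) (m + 1) (by omega)
        (by have : (1:ℕ) ≤ 2 ^ (m-1) := Nat.one_le_two_pow; omega)
        (by have : 2 ^ ((m+1) - 1) = 2 ^ m := by norm_num
            omega)
      exact ⟨T, hc, hd⟩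
    apply le_antisymm
    · exact Nat.sInf_le hmem
    · apply le_csInf ⟨m + 1, hmem⟩
      intro j hj
      by_contra hjm
      push_neg at hjm
      have h1 := hlower j hj
      have h2 : 2 ^ (j - 1) ≤ 2 ^ (m - 1) := Nat.pow_le_pow_right (by norm_num) (by omega)
      omega
  · intro hB
    push_neg at hB
    have hmem : m ∈ S := by
      obtain ⟨T, hc, hd⟩ := HCube.upper_bound (n := n) m hm2 hmn (by omega)
      exact ⟨T, hc, hd⟩
    apply le_antisymm
    · exact Nat.sInf_le hmem
    · apply le_csInf ⟨m, hmem⟩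
      intro j hj
      by_contra hjm
      push_neg at hjm
      have h1 := hlower j hj
      have h2 : 2 ^ (j - 1) ≤ 2 ^ (m - 2) := Nat.pow_le_pow_right (by norm_num) (by omega)
      have h3 : 2 ^ (m - 1) = 2 ^ (m - 2) + 2 ^ (m - 2) := by
        have hm1 : m - 1 = (m - 2) + 1 := by omega
        rw [hm1, pow_succ]
        omega
      have h4 : m - 2 < 2 ^ (m - 2) := Nat.lt_two_pow_self
      omega
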